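/- (Pressure function for weights with frequencies.) Let X = {−1,1}^ℕ with uniform Bernoulli measure σ. For each n ≥ 0 let g_n: {−1,1}^ℕ → {−1,1} be a Borel function of the coordinates x_{n+1}, x_{n+2}, …, and set f_n(x) = x_n g_n(x_{n+1}, x_{n+2}, …). Let (w_n) be a sequence of real numbers taking only the values v_0, v_1, …, v_m, and assume the frequencies p_j := lim_{N→∞} #{0 ≤ n < N : w_n = v_j}/N exist for 0 ≤ j ≤ m. Then for every λ ∈ ℝ, φ(λ) := lim_{N→∞} (1/N) log ∫_X exp(λ Σ_{n=0}^{N−1} w_n f_n(x)) dσ(x) exists and φ(λ) = Σ_{j=0}^{m} p_j log(e^{λ v_j} + e^{−λ v_j}) − log 2. -/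

import Mathlib

open MeasureTheory Filter Finset
open scoped ENNReal Topology

noncomputable section

/-- The two-point alphabet `{-1, 1} ⊆ ℝ`. -/
abbrev PM : Type := {r : ℝ // r = -1 ∨ r = 1}

/-- The cylinder `[a_0, …, a_{m-1}]` of all `y` with `y_i = a_i` for `0 ≤ i < m`. -/
def cyl {m : ℕ} (a : Fin m → PM) : Set (ℕ → PM) :=
  {y : ℕ → PM | ∀ i : Fin m, y i = a i}

open scoped Classical

def pmN : PM := ⟨-1, Or.inl rfl⟩
def pmP : PM := ⟨1, Or.inr rfl⟩

lemma pm_cases (s : PM) : s = pmN ∨ s = pmP := by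
  rcases s with ⟨r, h | h⟩
  · exact Or.inl (by simp [pmN, h])
  · exact Or.inr (by simp [pmP, h])

lemma pmN_ne_pmP : pmN ≠ pmP := by
  intro h
  have := congrArg Subtype.val h
  norm_num [pmN, pmP] at this

noncomputable instance : Fintype PM :=
  ⟨{pmN, pmP}, by intro s; rcases pm_cases s with h | h <;> simp [h]⟩

lemma univ_PM : (Finset.univ : Finset PM) = {pmN, pmP} := rfl

lemma sum_PM (f : PM → ℝ) : ∑ s : PM, f s = f pmN + f pmP := by
  rw [univ_PM, Finset.sum_pair pmN_ne_pmP]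

lemma measurableSet_PM (s : Set PM) : MeasurableSet s := (Set.toFinite s).measurableSet

lemma measurable_coord (n : ℕ) : Measurable (fun x : ℕ → PM => (x n : ℝ)) :=
  measurable_subtype_coe.comp (measurable_pi_apply n)

def cylSet : Set (Set (ℕ → PM)) := {S | ∃ (m : ℕ) (a : Fin m → PM), S = cyl a}

lemma measurableSet_cyl {m : ℕ} (a : Fin m → PM) : MeasurableSet (cyl a) := by
  have : cyl a = ⋂ i : Fin m, (fun x : ℕ → PM => x i) ⁻¹' {a i} := by
    ext x; simp [cyl]
  rw [this]
  exact MeasurableSet.iInter fun i =>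
    (measurable_pi_apply (i : ℕ)) (measurableSet_PM {a i})

lemma gen_eq : (inferInstance : MeasurableSpace (ℕ → PM)) =
    MeasurableSpace.generateFrom cylSet := by
  apply le_antisymm
  · rw [show (inferInstance : MeasurableSpace (ℕ → PM)) = MeasurableSpace.pi from rfl]
    refine iSup_le fun n => ?_
    rw [MeasurableSpace.comap_le_iff_le_map]
    intro s _
    rw [MeasurableSpace.map_def]
    have : (fun x : ℕ → PM => x n) ⁻¹' s =
        ⋃ (a : Fin (n + 1) → PM) (_ : a ⟨n, n.lt_succ_self⟩ ∈ s), cyl a := by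
      ext x
      simp only [Set.mem_preimage, Set.mem_iUnion]
      constructor
      · intro hx
        exact ⟨fun i => x i, hx, fun i => rfl⟩
      · rintro ⟨a, ha, hx⟩
        have := hx ⟨n, n.lt_succ_self⟩
        rw [this]; exact ha
    rw [this]
    exact MeasurableSet.iUnion fun a => MeasurableSet.iUnion fun ha =>
      MeasurableSpace.measurableSet_generateFrom ⟨n + 1, a, rfl⟩
  · exact MeasurableSpace.generateFrom_le (by rintro s ⟨m, a, rfl⟩; exact measurableSet_cyl a)

lemma cyl_subset_of_le {m k : ℕ} (h : m ≤ k) (a : Fin m → PM) (b : Fin k → PM)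
    (hab : ∀ i : Fin m, b ⟨i, lt_of_lt_of_le i.2 h⟩ = a i) : cyl b ⊆ cyl a := by
  intro y hy i
  have := hy ⟨i, lt_of_lt_of_le i.2 h⟩
  simpa [hab i] using this

lemma isPiSystem_cylSet : IsPiSystem cylSet := by
  rintro s ⟨m, a, rfl⟩ t ⟨k, b, rfl⟩ hne
  obtain ⟨x, hxa, hxb⟩ := hne
  rcases le_total m k with h | h
  · have hsub : cyl b ⊆ cyl a := by
      refine cyl_subset_of_le h a b fun i => ?_
      rw [← hxb ⟨i, lt_of_lt_of_le i.2 h⟩, hxa i]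
    rw [Set.inter_eq_right.mpr hsub]
    exact ⟨k, b, rfl⟩
  · have hsub : cyl a ⊆ cyl b := by
      refine cyl_subset_of_le h b a fun i => ?_
      rw [← hxa ⟨i, lt_of_lt_of_le i.2 h⟩, hxb i]
    rw [Set.inter_eq_left.mpr hsub]
    exact ⟨m, a, rfl⟩

lemma measure_ext_cyl (μ ν : Measure (ℕ → PM)) [IsFiniteMeasure μ] [IsFiniteMeasure ν]
    (h : ∀ (m : ℕ) (a : Fin m → PM), μ (cyl a) = ν (cyl a))
    (hu : μ Set.univ = ν Set.univ) : μ = ν := by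
  refine ext_of_generate_finite cylSet gen_eq isPiSystem_cylSet ?_ hu
  rintro s ⟨m, a, rfl⟩
  exact h m a

lemma pmN_val : (pmN : ℝ) = -1 := rfl
lemma pmP_val : (pmP : ℝ) = 1 := rfl

def shift : (ℕ → PM) → (ℕ → PM) := fun x n => x (n + 1)

lemma measurable_shift : Measurable shift :=
  measurable_pi_lambda _ fun n => measurable_pi_apply (n + 1)

/-- extend a sequence by putting `pmP` in front. -/
def ext1 : (ℕ → PM) → (ℕ → PM) := fun y n => Nat.casesOn n pmP fun k => y k

lemma measurable_ext1 : Measurable ext1 := by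
  apply measurable_pi_lambda
  intro n
  cases n with
  | zero => exact measurable_const
  | succ k => exact measurable_pi_apply k

lemma ext1_shift (x : ℕ → PM) (i : ℕ) (hi : 1 ≤ i) : ext1 (shift x) i = x i := by
  cases i with
  | zero => omega
  | succ k => rfl

lemma cyl_zero_eq (c : PM) : cyl (fun _ : Fin 1 => c) = {x : ℕ → PM | x 0 = c} := by
  ext x
  simp [cyl, Fin.forall_fin_one]

lemma measurableSet_coordEq (c : PM) : MeasurableSet {x : ℕ → PM | x 0 = c} := by
  have h : {x : ℕ → PM | x 0 = c} = (fun x : ℕ → PM => x 0) ⁻¹' {c} := rfl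
  rw [h]
  exact measurable_pi_apply 0 (measurableSet_PM _)

/-- Independence of coordinate 0 from the tail. -/
lemma half_lemma (σ : Measure (ℕ → PM)) [IsProbabilityMeasure σ]
    (hσ : ∀ (m : ℕ) (a : Fin m → PM), σ (cyl a) = (2 : ℝ≥0∞)⁻¹ ^ m) (c : PM) :
    Measure.map shift (σ.restrict {x | x 0 = c}) = (2 : ℝ≥0∞)⁻¹ • σ := by
  have hsmul : IsFiniteMeasure ((2 : ℝ≥0∞)⁻¹ • σ) := by
    constructor
    simp [measure_univ]
  have hmap : IsFiniteMeasure (Measure.map shift (σ.restrict {x | x 0 = c})) := by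
    constructor
    rw [Measure.map_apply measurable_shift MeasurableSet.univ]
    exact measure_lt_top _ _
  refine measure_ext_cyl _ _ ?_ ?_
  · intro m a
    rw [Measure.map_apply measurable_shift (measurableSet_cyl a),
      Measure.restrict_apply (measurable_shift (measurableSet_cyl a))]
    have hset : shift ⁻¹' cyl a ∩ {x | x 0 = c} = cyl (Fin.cons c a) := by
      ext x
      simp only [Set.mem_inter_iff, Set.mem_preimage, Set.mem_setOf_eq, cyl]
      constructor
      · rintro ⟨h1, h2⟩ i
        refine Fin.cases ?_ ?_ i
        · simpa using h2
        · intro j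
          simpa [shift] using h1 j
      · intro h
        refine ⟨fun i => ?_, ?_⟩
        · have := h i.succ
          simpa [shift] using this
        · simpa using h 0
    rw [hset, hσ (m + 1) (Fin.cons c a)]
    simp only [Measure.smul_apply, smul_eq_mul, hσ m a]
    rw [pow_succ]
    ring
  · rw [Measure.map_apply measurable_shift MeasurableSet.univ]
    simp only [Set.preimage_univ, Measure.restrict_apply MeasurableSet.univ,
      Set.univ_inter]
    have : σ {x | x 0 = c} = (2 : ℝ≥0∞)⁻¹ := by
      rw [← cyl_zero_eq, hσ 1 (fun _ => c)]
      simp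
    rw [this]
    simp [measure_univ]

/-- Key lemma: the measure of the "twisted cylinder" is `2⁻¹ ^ m`. -/
lemma key_lemma (σ : Measure (ℕ → PM)) [IsProbabilityMeasure σ]
    (hσ : ∀ (m : ℕ) (a : Fin m → PM), σ (cyl a) = (2 : ℝ≥0∞)⁻¹ ^ m) :
    ∀ (m : ℕ) (g : ℕ → (ℕ → PM) → ℝ), (∀ k, Measurable (g k)) →
    (∀ k x, g k x = -1 ∨ g k x = 1) →
    (∀ (k : ℕ) (x y : ℕ → PM), (∀ i, k + 1 ≤ i → x i = y i) → g k x = g k y) →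
    ∀ a : Fin m → PM,
      σ {x | ∀ i : Fin m, (x i : ℝ) * g i x = (a i : ℝ)} = (2 : ℝ≥0∞)⁻¹ ^ m := by
  intro m
  induction m with
  | zero =>
    intro g _ _ _ a
    have : {x : ℕ → PM | ∀ i : Fin 0, (x i : ℝ) * g i x = (a i : ℝ)} = Set.univ := by
      ext x; simp [Fin.forall_fin_zero_pi]
    rw [this]; simp
  | succ m ih =>
    intro g hgm hgv hgd a
    -- shifted system
    set g' : ℕ → (ℕ → PM) → ℝ := fun k y => g (k + 1) (ext1 y) with hg'
    have hg'm : ∀ k, Measurable (g' k) := fun k => (hgm (k + 1)).comp measurable_ext1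
    have hg'v : ∀ k y, g' k y = -1 ∨ g' k y = 1 := fun k y => hgv (k + 1) (ext1 y)
    have hg'd : ∀ (k : ℕ) (x y : ℕ → PM), (∀ i, k + 1 ≤ i → x i = y i) →
        g' k x = g' k y := by
      intro k x y hxy
      refine hgd (k + 1) _ _ fun i hi => ?_
      cases i with
      | zero => omega
      | succ j => exact hxy j (by omega)
    set a' : Fin m → PM := fun i => a i.succ with ha'
    set C : Set (ℕ → PM) := {y | ∀ i : Fin m, (y i : ℝ) * g' i y = (a' i : ℝ)} with hC
    have hCmeas : MeasurableSet C := by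
      have : C = ⋂ i : Fin m,
          (fun y => (y (i : ℕ) : ℝ) * g' i y) ⁻¹' {(a' i : ℝ)} := by
        ext y; simp [hC]
      rw [this]
      exact MeasurableSet.iInter fun i =>
        ((measurable_coord i).mul (hg'm i)) (measurableSet_singleton _)
    set G : (ℕ → PM) → ℝ := fun y => g 0 (ext1 y) with hG
    have hGmeas : Measurable G := (hgm 0).comp measurable_ext1
    have hGv : ∀ y, G y = -1 ∨ G y = 1 := fun y => hgv 0 (ext1 y)
    -- E c
    set E : PM → Set (ℕ → PM) := fun c => {y | (c : ℝ) * G y = (a 0 : ℝ)} with hE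
    have hEmeas : ∀ c, MeasurableSet (E c) := by
      intro c
      exact (measurable_const.mul hGmeas) (measurableSet_singleton _)
    -- main set decomposition
    have hdecomp : {x | ∀ i : Fin (m + 1), (x i : ℝ) * g i x = (a i : ℝ)} =
        ({x | x 0 = pmN} ∩ shift ⁻¹' (E pmN ∩ C)) ∪
        ({x | x 0 = pmP} ∩ shift ⁻¹' (E pmP ∩ C)) := by
      have hGx : ∀ x : ℕ → PM, G (shift x) = g 0 x := by
        intro x
        exact (hgd 0 _ _ fun i hi => ext1_shift x i hi).symm ▸
          (hgd 0 (ext1 (shift x)) x fun i hi => ext1_shift x i hi)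
      have hg'x : ∀ (x : ℕ → PM) (i : Fin m),
          (shift x i : ℝ) * g' i (shift x) = (x (i + 1) : ℝ) * g (i + 1) x := by
        intro x i
        have : g' i (shift x) = g (i + 1) x :=
          hgd (i + 1) (ext1 (shift x)) x fun j hj => ext1_shift x j (by omega)
        rw [this]; rfl
      ext x
      simp only [Set.mem_setOf_eq, Set.mem_union, Set.mem_inter_iff, Set.mem_preimage]
      constructor
      · intro h
        have hmem : shift x ∈ C := by
          intro i
          rw [hg'x x i]
          have := h i.succ
          simpa using this
        have h0 := h 0
        rcases pm_cases (x 0) with hx0 | hx0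
        · refine Or.inl ⟨hx0, ?_, hmem⟩
          rw [hE]
          simp only [Set.mem_setOf_eq, hGx]
          rw [← hx0]
          simpa using h0
        · refine Or.inr ⟨hx0, ?_, hmem⟩
          rw [hE]
          simp only [Set.mem_setOf_eq, hGx]
          rw [← hx0]
          simpa using h0
      · intro h
        rcases h with ⟨hx0, hEc, hmem⟩ | ⟨hx0, hEc, hmem⟩ <;>
        · intro i
          refine Fin.cases ?_ ?_ i
          · have hEc' : ((x 0 : ℝ)) * g 0 x = (a 0 : ℝ) := by
              simp only [hE, Set.mem_setOf_eq] at hEc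
              rw [hGx x] at hEc
              rw [hx0]
              exact hEc
            simpa using hEc'
          · intro j
            have := hmem j
            rw [hg'x x j] at this
            simpa using this
    rw [hdecomp]
    have hmeas1 : ∀ c, MeasurableSet ({x : ℕ → PM | x 0 = c} ∩ shift ⁻¹' (E c ∩ C)) :=
      fun c => (measurableSet_coordEq c).inter
        (measurable_shift ((hEmeas c).inter hCmeas))
    have hdisj : Disjoint ({x : ℕ → PM | x 0 = pmN} ∩ shift ⁻¹' (E pmN ∩ C))
        ({x : ℕ → PM | x 0 = pmP} ∩ shift ⁻¹' (E pmP ∩ C)) := by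
      rw [Set.disjoint_left]
      rintro x ⟨h1, _⟩ ⟨h2, _⟩
      exact pmN_ne_pmP (h1 ▸ h2 ▸ rfl)
    rw [measure_union hdisj (hmeas1 pmP)]
    have hval : ∀ c : PM, σ ({x : ℕ → PM | x 0 = c} ∩ shift ⁻¹' (E c ∩ C)) =
        (2 : ℝ≥0∞)⁻¹ * σ (E c ∩ C) := by
      intro c
      have : σ ({x : ℕ → PM | x 0 = c} ∩ shift ⁻¹' (E c ∩ C)) =
          Measure.map shift (σ.restrict {x | x 0 = c}) (E c ∩ C) := by
        rw [Measure.map_apply measurable_shift ((hEmeas c).inter hCmeas),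
          Measure.restrict_apply (measurable_shift ((hEmeas c).inter hCmeas))]
        rw [Set.inter_comm]
      rw [this, half_lemma σ hσ c]
      simp [Measure.smul_apply, smul_eq_mul]
    rw [hval pmN, hval pmP, ← mul_add]
    have hEunion : E pmN ∩ C ∪ E pmP ∩ C = C := by
      rw [← Set.union_inter_distrib_right]
      have : E pmN ∪ E pmP = Set.univ := by
        ext y
        simp only [hE, Set.mem_union, Set.mem_setOf_eq, Set.mem_univ, iff_true]
        rcases hGv y with h | h <;> rcases (a 0).2 with h0 | h0 <;>
          simp [h, h0, pmN_val, pmP_val] <;> tauto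
      rw [this, Set.univ_inter]
    have hEdisj : Disjoint (E pmN ∩ C) (E pmP ∩ C) := by
      rw [Set.disjoint_left]
      rintro y ⟨h1, _⟩ ⟨h2, _⟩
      simp only [hE, Set.mem_setOf_eq, pmN_val, pmP_val, one_mul, neg_one_mul] at h1 h2
      rcases hGv y with h | h <;> rw [h] at h1 h2 <;> rw [← h1] at h2 <;> norm_num at h2
    have : σ (E pmN ∩ C) + σ (E pmP ∩ C) = σ C :=
      (measure_union hEdisj ((hEmeas pmP).inter hCmeas)).symm.trans (by rw [hEunion])
    rw [this, ih g' hg'm hg'v hg'd a', pow_succ]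
    ring

lemma pm_mul (s : PM) (t : ℝ) (ht : t = -1 ∨ t = 1) :
    (s : ℝ) * t = -1 ∨ (s : ℝ) * t = 1 := by
  rcases s.2 with h | h <;> rcases ht with h' | h' <;> simp [h, h'] <;> norm_num

lemma integral_eq (σ : Measure (ℕ → PM)) [IsProbabilityMeasure σ]
    (hσ : ∀ (m : ℕ) (a : Fin m → PM), σ (cyl a) = (2 : ℝ≥0∞)⁻¹ ^ m)
    (g : ℕ → (ℕ → PM) → ℝ) (hgm : ∀ k, Measurable (g k))
    (hgv : ∀ k x, g k x = -1 ∨ g k x = 1)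
    (hgd : ∀ (k : ℕ) (x y : ℕ → PM), (∀ i, k + 1 ≤ i → x i = y i) → g k x = g k y)
    (w : ℕ → ℝ) (lam : ℝ) (N : ℕ) :
    ∫ x, Real.exp (lam * ∑ n ∈ Finset.range N, w n * ((x n : ℝ) * g n x)) ∂σ =
      ∏ n ∈ Finset.range N,
        ((Real.exp (lam * w n) + Real.exp (-(lam * w n))) / 2) := by
  set S : (Fin N → PM) → Set (ℕ → PM) :=
    fun a => {x | ∀ i : Fin N, (x i : ℝ) * g i x = (a i : ℝ)} with hSdef
  have hSmeas : ∀ a, MeasurableSet (S a) := by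
    intro a
    have : S a = ⋂ i : Fin N,
        (fun x : ℕ → PM => (x (i : ℕ) : ℝ) * g i x) ⁻¹' {(a i : ℝ)} := by
      ext x; simp [hSdef]
    rw [this]
    exact MeasurableSet.iInter fun i =>
      ((measurable_coord i).mul (hgm i)) (measurableSet_singleton _)
  have hSval : ∀ a, σ (S a) = (2 : ℝ≥0∞)⁻¹ ^ N :=
    fun a => key_lemma σ hσ N g hgm hgv hgd a
  -- pointwise decomposition
  have hpt : ∀ x : ℕ → PM,
      Real.exp (lam * ∑ n ∈ Finset.range N, w n * ((x n : ℝ) * g n x)) =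
      ∑ a : Fin N → PM, Set.indicator (S a)
        (fun _ => Real.exp (lam * ∑ i : Fin N, w i * (a i : ℝ))) x := by
    intro x
    set a₀ : Fin N → PM := fun i => ⟨(x i : ℝ) * g i x, pm_mul _ _ (hgv i x)⟩ with ha₀
    rw [Finset.sum_eq_single a₀]
    · have hx : x ∈ S a₀ := fun i => rfl
      rw [Set.indicator_of_mem hx]
      congr 1
      rw [← Fin.sum_univ_eq_sum_range (fun n => w n * ((x n : ℝ) * g n x)) N]
    · intro a _ hne
      apply Set.indicator_of_notMem
      intro hx
      apply hne
      funext i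
      exact Subtype.ext (hx i).symm
    · intro h
      exact absurd (Finset.mem_univ a₀) h
  rw [integral_congr_ae (Filter.EventuallyEq.of_eq (funext hpt))]
  rw [integral_finset_sum _ (fun a _ => (integrable_const _).indicator (hSmeas a))]
  have hind : ∀ a : Fin N → PM,
      ∫ x, Set.indicator (S a)
        (fun _ => Real.exp (lam * ∑ i : Fin N, w i * (a i : ℝ))) x ∂σ =
      (1 / 2 : ℝ) ^ N * Real.exp (lam * ∑ i : Fin N, w i * (a i : ℝ)) := by
    intro a
    rw [integral_indicator_const _ (hSmeas a), measureReal_def, hSval a]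
    rw [smul_eq_mul]
    congr 1
    rw [ENNReal.toReal_pow]
    norm_num
  simp only [hind]
  -- turn into a product over PM-valued vectors
  have hterm : ∀ a : Fin N → PM,
      (1 / 2 : ℝ) ^ N * Real.exp (lam * ∑ i : Fin N, w i * (a i : ℝ)) =
      ∏ i : Fin N, (Real.exp (lam * (w i * (a i : ℝ))) * (1 / 2)) := by
    intro a
    rw [Finset.prod_mul_distrib, Finset.prod_const, Finset.card_univ,
      Fintype.card_fin, Finset.mul_sum, Real.exp_sum]
    ring
  simp only [hterm]
  have hswap : ∑ a : Fin N → PM, ∏ i : Fin N,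
      (Real.exp (lam * (w i * (a i : ℝ))) * (1 / 2)) =
      ∏ i : Fin N, ∑ s : PM, (Real.exp (lam * (w i * (s : ℝ))) * (1 / 2)) := by
    rw [Finset.prod_univ_sum]
    rw [← Fintype.piFinset_univ]
  rw [hswap]
  rw [← Fin.prod_univ_eq_prod_range
    (fun n => (Real.exp (lam * w n) + Real.exp (-(lam * w n))) / 2) N]
  refine Finset.prod_congr rfl fun i _ => ?_
  rw [sum_PM (fun s => Real.exp (lam * (w i * (s : ℝ))) * (1 / 2))]
  rw [pmN_val, pmP_val]
  have h1 : lam * (w i * (-1 : ℝ)) = -(lam * w i) := by ring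
  have h2 : lam * (w i * (1 : ℝ)) = lam * w i := by ring
  rw [h1, h2]
  ring

/-- Pressure function for weights with frequencies: with
`f_n(x) = x_n g_n(x_{n+1}, …)` as in Statement 16 and weights `(w_n)` taking the
distinct values `v_0, …, v_m` with frequencies `p_j`, the pressure exists and equals
`∑ p_j log(e^{λ v_j} + e^{−λ v_j}) − log 2`. -/
theorem pressure_for_frequency_weights (σ : Measure (ℕ → PM)) [IsProbabilityMeasure σ]
    (hσ : ∀ (m : ℕ) (a : Fin m → PM), σ (cyl a) = (2 : ℝ≥0∞)⁻¹ ^ m)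
    (g : ℕ → (ℕ → PM) → ℝ)
    (hgm : ∀ k, Measurable (g k))
    (hgv : ∀ k x, g k x = -1 ∨ g k x = 1)
    (hgd : ∀ (k : ℕ) (x y : ℕ → PM), (∀ i, k + 1 ≤ i → x i = y i) → g k x = g k y)
    (m : ℕ) (v : Fin (m + 1) → ℝ) (hvinj : Function.Injective v)
    (w : ℕ → ℝ) (hw : ∀ n, ∃ j, w n = v j)
    (p : Fin (m + 1) → ℝ)
    (hp : ∀ j, Tendsto
      (fun N : ℕ => (((Finset.range N).filter fun n => w n = v j).card : ℝ) / N)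
      atTop (𝓝 (p j)))
    (lam : ℝ) :
    Tendsto (fun N : ℕ =>
        Real.log (∫ x, Real.exp
          (lam * ∑ n ∈ Finset.range N, w n * ((x n : ℝ) * g n x)) ∂σ) / N)
      atTop
      (𝓝 (∑ j, p j * Real.log (Real.exp (lam * v j) + Real.exp (-(lam * v j)))
            - Real.log 2)) := by
  set L : ℝ → ℝ := fun t => Real.log (Real.exp (lam * t) + Real.exp (-(lam * t)))
    with hL
  have hpos : ∀ t : ℝ, 0 < Real.exp (lam * t) + Real.exp (-(lam * t)) :=
    fun t => add_pos (Real.exp_pos _) (Real.exp_pos _)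
  -- log of the integral
  have hlog : ∀ N : ℕ,
      Real.log (∫ x, Real.exp
        (lam * ∑ n ∈ Finset.range N, w n * ((x n : ℝ) * g n x)) ∂σ) =
      (∑ n ∈ Finset.range N, L (w n)) - N * Real.log 2 := by
    intro N
    rw [integral_eq σ hσ g hgm hgv hgd w lam N]
    rw [Real.log_prod (fun n _ => by positivity)]
    have : ∀ n ∈ Finset.range N,
        Real.log ((Real.exp (lam * w n) + Real.exp (-(lam * w n))) / 2) =
        L (w n) - Real.log 2 := by
      intro n _
      rw [Real.log_div (ne_of_gt (hpos (w n))) two_ne_zero]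
    rw [Finset.sum_congr rfl this, Finset.sum_sub_distrib, Finset.sum_const,
      Finset.card_range, nsmul_eq_mul]
  -- fiberwise decomposition of the sum
  set jf : ℕ → Fin (m + 1) := fun n => Classical.choose (hw n) with hjf
  have hjfspec : ∀ n, w n = v (jf n) := fun n => Classical.choose_spec (hw n)
  have hfilter : ∀ (N : ℕ) (j : Fin (m + 1)),
      (Finset.range N).filter (fun n => w n = v j) =
      (Finset.range N).filter (fun n => jf n = j) := by
    intro N j
    apply Finset.filter_congr
    intro n _
    constructor
    · intro h
      exact hvinj (by rw [← hjfspec n, h])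
    · intro h
      rw [hjfspec n, h]
  have hsum : ∀ N : ℕ, ∑ n ∈ Finset.range N, L (w n) =
      ∑ j : Fin (m + 1),
        (((Finset.range N).filter fun n => w n = v j).card : ℝ) * L (v j) := by
    intro N
    have h1 : ∑ n ∈ Finset.range N, L (w n) =
        ∑ j : Fin (m + 1), ∑ n ∈ (Finset.range N).filter (fun n => jf n = j),
          L (w n) :=
      (Finset.sum_fiberwise_of_maps_to (fun n _ => Finset.mem_univ (jf n)) _).symm
    rw [h1]
    refine Finset.sum_congr rfl fun j _ => ?_
    rw [← hfilter N j]
    rw [Finset.sum_congr rfl (fun n hn => ?_), Finset.sum_const, nsmul_eq_mul]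
    rw [(Finset.mem_filter.mp hn).2]
  -- the eventual formula
  have hev : ∀ᶠ N : ℕ in atTop,
      Real.log (∫ x, Real.exp
        (lam * ∑ n ∈ Finset.range N, w n * ((x n : ℝ) * g n x)) ∂σ) / N =
      (∑ j : Fin (m + 1),
        ((((Finset.range N).filter fun n => w n = v j).card : ℝ) / N) * L (v j))
        - Real.log 2 := by
    filter_upwards [eventually_ge_atTop 1] with N hN
    have hN0 : (N : ℝ) ≠ 0 := Nat.cast_ne_zero.mpr (by omega)
    rw [hlog N, hsum N, sub_div, Finset.sum_div]
    congr 1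
    · refine Finset.sum_congr rfl fun j _ => ?_
      ring
    · field_simp
  have hlim : Tendsto (fun N : ℕ =>
      (∑ j : Fin (m + 1),
        ((((Finset.range N).filter fun n => w n = v j).card : ℝ) / N) * L (v j))
        - Real.log 2) atTop
      (𝓝 ((∑ j, p j * L (v j)) - Real.log 2)) :=
    (tendsto_finset_sum _ fun j _ => (hp j).mul_const (L (v j))).sub
      tendsto_const_nhds
  exact Tendsto.congr' (Filter.EventuallyEq.symm hev) hlim
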